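/- Theorem (arbitrarily many sequential detections for the GHZ state): For every integer N ≥ 3 and every natural number n, there exist sharpness parameters λ_1, …, λ_n ∈ (0,1) such that, setting ρ_1 = |GHZ_N⟩⟨GHZ_N| and ρ_k = (id ⊗ Φ_{λ_{k−1}})(ρ_{k−1}) for 2 ≤ k ≤ n (the map acting on the N-th qubit), one has Tr(W^{λ_k} ρ_k) < 0 for every k = 1, …, n; i.e., all n sequential observers detect genuine multipartite entanglement. -/

import Mathlib

open Matrix
open scoped ComplexOrder

noncomputable section

/-- The space of operators on `N` qubits: complex `2^N × 2^N` matrices, with the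
`N`-fold tensor-product structure made explicit by indexing rows and columns by
functions `Fin N → Fin 2`. -/
abbrev QM (N : ℕ) := Matrix (Fin N → Fin 2) (Fin N → Fin 2) ℂ

/-- The Pauli matrix σ_x. -/
def sigx : Matrix (Fin 2) (Fin 2) ℂ := !![0, 1; 1, 0]

/-- The Pauli matrix σ_z. -/
def sigz : Matrix (Fin 2) (Fin 2) ℂ := !![1, 0; 0, -1]

/-- The tensor (Kronecker) product `f 0 ⊗ f 1 ⊗ ⋯ ⊗ f (N-1)` of single-qubit operators. -/
def tensorAll (N : ℕ) (f : Fin N → Matrix (Fin 2) (Fin 2) ℂ) : QM N :=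
  Matrix.of fun v w => ∏ i, f i (v i) (w i)

/-- The single-qubit operator `M` acting on qubit `m`, tensored with the identity
on all other qubits. -/
def site (N : ℕ) (m : Fin N) (M : Matrix (Fin 2) (Fin 2) ℂ) : QM N :=
  tensorAll N (fun i => if i = m then M else 1)

/-- GHZ stabilizer generator `S_1 = σ_x^(1) σ_x^(2) ⋯ σ_x^(N)`. -/
def ghzS1 (N : ℕ) : QM N := tensorAll N (fun _ => sigx)

/-- GHZ stabilizer generator with σ_z on qubits `m-1` and `m` (0-based `m : Fin N`,
`m ≠ 0`); it represents the 1-based generator `S_{m+1} = σ_z^{(m)} σ_z^{(m+1)}`. -/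
def ghzSz (N : ℕ) (m : Fin N) : QM N :=
  tensorAll N (fun i => if i.val = m.val - 1 ∨ i = m then sigz else 1)

/-- The product `∏_{m=2}^{N} (I + S_m)/2` appearing in the GHZ witness
(the factors pairwise commute, so the list ordering is immaterial). -/
def ghzProd (N : ℕ) : QM N :=
  (((List.finRange N).filter (fun m => m.val ≠ 0)).map
    (fun m => (1/2 : ℂ) • ((1 : QM N) + ghzSz N m))).prod

/-- The GHZ genuine-multipartite-entanglement witness
`W = 3 I − 2 [ (I + S_1)/2 + ∏_{m=2}^N (I + S_m)/2 ]`. -/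
def ghzWitness (N : ℕ) : QM N :=
  (3 : ℂ) • (1 : QM N) -
    (2 : ℂ) • ((1/2 : ℂ) • ((1 : QM N) + ghzS1 N) + ghzProd N)

/-- The modified (unsharp) GHZ witness
`W^λ = 3 I − 2 [ (I + λ S_1)/2 + ∏_{m=2}^N (I + S_m)/2 ]`. -/
def ghzWitnessMod (N : ℕ) (lam : ℝ) : QM N :=
  (3 : ℂ) • (1 : QM N) -
    (2 : ℂ) • ((1/2 : ℂ) • ((1 : QM N) + (lam : ℂ) • ghzS1 N) + ghzProd N)

/-- The `N`-qubit GHZ state vector `(|0⟩^{⊗N} + |1⟩^{⊗N})/√2`. -/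
def ghzVec (N : ℕ) : (Fin N → Fin 2) → ℂ := fun v =>
  if ∀ i, v i = 0 then ((1 / Real.sqrt 2 : ℝ) : ℂ)
  else if ∀ i, v i = 1 then ((1 / Real.sqrt 2 : ℝ) : ℂ) else 0

/-- The rank-one projector `|ψ⟩⟨ψ|` onto a vector `ψ`. -/
def outer (N : ℕ) (ψ : (Fin N → Fin 2) → ℂ) : QM N :=
  Matrix.vecMulVec ψ (star ψ)

/-- The single-qubit unsharp-measurement channel
`Φ_λ(ρ) = ((2+√(1−λ²))/4)ρ + (1/4)σ_z ρ σ_z + ((1−√(1−λ²))/4)σ_x ρ σ_x`, applied to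
qubit `m` of an `N`-qubit operator (and acting as the identity on the other qubits). -/
def phiMap (N : ℕ) (m : Fin N) (lam : ℝ) (ρ : QM N) : QM N :=
  (((2 + Real.sqrt (1 - lam ^ 2)) / 4 : ℝ) : ℂ) • ρ
    + (1/4 : ℂ) • (site N m sigz * ρ * site N m sigz)
    + (((1 - Real.sqrt (1 - lam ^ 2)) / 4 : ℝ) : ℂ) • (site N m sigx * ρ * site N m sigx)

-- basic entry lemmas
lemma sigz_apply (a b : Fin 2) : sigz a b = if a = b then (if a = 0 then 1 else -1) else 0 := by
  fin_cases a <;> fin_cases b <;> simp [sigz]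

lemma sigx_apply (a b : Fin 2) : sigx a b = if a = b then 0 else 1 := by
  fin_cases a <;> fin_cases b <;> simp [sigx]

def flipAt (N : ℕ) (m : Fin N) (v : Fin N → Fin 2) : Fin N → Fin 2 :=
  fun i => if i = m then (if v i = 0 then 1 else 0) else v i

lemma fin2_cases (a : Fin 2) : a = 0 ∨ a = 1 := by fin_cases a <;> simp

lemma flipAt_flipAt (N : ℕ) (m : Fin N) (v : Fin N → Fin 2) :
    flipAt N m (flipAt N m v) = v := by
  funext i
  by_cases h : i = m
  · subst h; rcases fin2_cases (v i) with hv | hv <;> simp [flipAt, hv]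
  · simp [flipAt, h]

lemma flipAt_eq_iff (N : ℕ) (m : Fin N) (u v : Fin N → Fin 2) :
    u = flipAt N m v ↔ v = flipAt N m u := by
  constructor <;> rintro rfl <;> rw [flipAt_flipAt]

def zsgn (N : ℕ) (m : Fin N) (v : Fin N → Fin 2) : ℂ := if v m = 0 then 1 else -1

lemma siteZ (N : ℕ) (m : Fin N) :
    site N m sigz = Matrix.diagonal (zsgn N m) := by
  ext u v
  by_cases h : u = v
  · subst h
    simp only [site, tensorAll, Matrix.of_apply, Matrix.diagonal_apply_eq]
    have : ∀ i, (if i = m then sigz else 1) (u i) (u i)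
        = if i = m then zsgn N m u else 1 := by
      intro i
      by_cases hi : i = m
      · subst hi; simp [sigz_apply, zsgn]
      · simp [hi, Matrix.one_apply]
    rw [Finset.prod_congr rfl fun i _ => this i]
    simp [Finset.prod_ite_eq']
  · obtain ⟨i, hi⟩ : ∃ i, u i ≠ v i := by
      by_contra hc; push_neg at hc; exact h (funext hc)
    simp only [site, tensorAll, Matrix.of_apply, Matrix.diagonal_apply_ne _ h]
    refine Finset.prod_eq_zero (Finset.mem_univ i) ?_
    by_cases him : i = m
    · subst him; simp [sigz_apply, hi]
    · simp [him, Matrix.one_apply, hi]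

lemma siteX_apply (N : ℕ) (m : Fin N) (u v : Fin N → Fin 2) :
    site N m sigx u v = if u = flipAt N m v then 1 else 0 := by
  by_cases h : u = flipAt N m v
  · subst h
    simp only [site, tensorAll, Matrix.of_apply, if_pos rfl]
    refine Finset.prod_eq_one fun i _ => ?_
    by_cases him : i = m
    · subst him
      rcases fin2_cases (v i) with hv | hv <;> simp [flipAt, hv, sigx_apply]
    · simp [him, flipAt, Matrix.one_apply]
  · obtain ⟨i, hi⟩ : ∃ i, u i ≠ flipAt N m v i := by
      by_contra hc; push_neg at hc; exact h (funext hc)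
    simp only [site, tensorAll, Matrix.of_apply, if_neg h]
    refine Finset.prod_eq_zero (Finset.mem_univ i) ?_
    by_cases him : i = m
    · subst him
      have : u i = v i := by
        rcases fin2_cases (v i) with hv | hv <;> rcases fin2_cases (u i) with hu | hu <;>
          simp_all [flipAt]
      simp [sigx_apply, this]
    · have : u i ≠ v i := by simpa [flipAt, him] using hi
      simp [him, Matrix.one_apply, this]
-- conjugation entry lemmas
lemma conjZ_apply (N : ℕ) (m : Fin N) (ρ : QM N) (u v : Fin N → Fin 2) :
    (site N m sigz * ρ * site N m sigz) u v = zsgn N m u * ρ u v * zsgn N m v := by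
  rw [siteZ, Matrix.mul_diagonal, Matrix.diagonal_mul]

lemma conjX_apply (N : ℕ) (m : Fin N) (ρ : QM N) (u v : Fin N → Fin 2) :
    (site N m sigx * ρ * site N m sigx) u v = ρ (flipAt N m u) (flipAt N m v) := by
  have hP : ∀ a b, site N m sigx a b = if b = flipAt N m a then 1 else 0 := by
    intro a b; rw [siteX_apply]; exact if_congr (flipAt_eq_iff N m a b) rfl rfl
  have h1 : ∀ b, (site N m sigx * ρ) u b = ρ (flipAt N m u) b := by
    intro b
    rw [Matrix.mul_apply]
    simp [hP, ite_mul, Finset.sum_ite_eq]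
  rw [Matrix.mul_apply]
  simp only [h1, siteX_apply]
  simp [mul_ite, Finset.sum_ite_eq']
-- special vectors
def w00 (N : ℕ) : Fin N → Fin 2 := fun _ => 0
def w11 (N : ℕ) : Fin N → Fin 2 := fun _ => 1
def w01 (N : ℕ) : Fin N → Fin 2 := fun i => if (i : ℕ) = N - 1 then 1 else 0
def w10 (N : ℕ) : Fin N → Fin 2 := fun i => if (i : ℕ) = N - 1 then 0 else 1

def lastq (N : ℕ) (h : 3 ≤ N) : Fin N := ⟨N - 1, Nat.sub_lt (lt_of_lt_of_le (by decide) h) Nat.one_pos⟩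

lemma w01_last {N : ℕ} (hN : 3 ≤ N) : w01 N (lastq N hN) = 1 := by simp [w01, lastq]
lemma w10_last {N : ℕ} (hN : 3 ≤ N) : w10 N (lastq N hN) = 0 := by simp [w10, lastq]

lemma flip_w00 {N : ℕ} (hN : 3 ≤ N) : flipAt N (lastq N hN) (w00 N) = w01 N := by
  funext i
  by_cases h : i = lastq N hN
  · subst h; simp [flipAt, w00, w01, lastq]
  · have : (i : ℕ) ≠ N - 1 := fun hc => h (Fin.ext hc)
    simp [flipAt, w00, w01, h, this]

lemma flip_w11 {N : ℕ} (hN : 3 ≤ N) : flipAt N (lastq N hN) (w11 N) = w10 N := by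
  funext i
  by_cases h : i = lastq N hN
  · subst h; simp [flipAt, w11, w10, lastq]
  · have : (i : ℕ) ≠ N - 1 := fun hc => h (Fin.ext hc)
    simp [flipAt, w11, w10, h, this]

lemma flip_w01 {N : ℕ} (hN : 3 ≤ N) : flipAt N (lastq N hN) (w01 N) = w00 N := by
  rw [← flip_w00 hN, flipAt_flipAt]

lemma flip_w10 {N : ℕ} (hN : 3 ≤ N) : flipAt N (lastq N hN) (w10 N) = w11 N := by
  rw [← flip_w11 hN, flipAt_flipAt]

lemma zsgn_w00 {N : ℕ} (hN : 3 ≤ N) : zsgn N (lastq N hN) (w00 N) = 1 := by simp [zsgn, w00]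
lemma zsgn_w11 {N : ℕ} (hN : 3 ≤ N) : zsgn N (lastq N hN) (w11 N) = -1 := by
  simp [zsgn, w11]
lemma zsgn_w01 {N : ℕ} (hN : 3 ≤ N) : zsgn N (lastq N hN) (w01 N) = -1 := by
  simp [zsgn, w01_last hN]
lemma zsgn_w10 {N : ℕ} (hN : 3 ≤ N) : zsgn N (lastq N hN) (w10 N) = 1 := by
  simp [zsgn, w10_last hN]

lemma w00_ne_w11 {N : ℕ} (hN : 3 ≤ N) : w00 N ≠ w11 N := by
  intro h
  have := congrFun h ⟨0, by omega⟩
  simp [w00, w11] at this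

lemma w00_ne_w01 {N : ℕ} (hN : 3 ≤ N) : w00 N ≠ w01 N := by
  intro h
  have := congrFun h (lastq N hN)
  rw [w01_last hN] at this
  simp [w00] at this

lemma w00_ne_w10 {N : ℕ} (hN : 3 ≤ N) : w00 N ≠ w10 N := by
  intro h
  have := congrFun h ⟨0, by omega⟩
  have h0 : ((⟨0, by omega⟩ : Fin N) : ℕ) ≠ N - 1 := by simp; omega
  simp [w00, w10, h0] at this

lemma w11_ne_w01 {N : ℕ} (hN : 3 ≤ N) : w11 N ≠ w01 N := by
  intro h
  have := congrFun h ⟨0, by omega⟩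
  have h0 : ((⟨0, by omega⟩ : Fin N) : ℕ) ≠ N - 1 := by simp; omega
  simp [w11, w01, h0] at this

lemma w11_ne_w10 {N : ℕ} (hN : 3 ≤ N) : w11 N ≠ w10 N := by
  intro h
  have := congrFun h (lastq N hN)
  rw [w10_last hN] at this
  simp [w11] at this

lemma w01_ne_w10 {N : ℕ} (hN : 3 ≤ N) : w01 N ≠ w10 N := by
  intro h
  have := congrFun h (lastq N hN)
  rw [w01_last hN, w10_last hN] at this
  simp at this

-- rho family
def rhoF (N : ℕ) (a b c d : ℝ) : QM N :=
  (a : ℂ) • (Matrix.single (w00 N) (w00 N) 1 + Matrix.single (w11 N) (w11 N) 1)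
  + (b : ℂ) • (Matrix.single (w01 N) (w01 N) 1 + Matrix.single (w10 N) (w10 N) 1)
  + (c : ℂ) • (Matrix.single (w00 N) (w11 N) 1 + Matrix.single (w11 N) (w00 N) 1)
  + (d : ℂ) • (Matrix.single (w01 N) (w10 N) 1 + Matrix.single (w10 N) (w01 N) 1)

lemma conjZ_E (N : ℕ) (m : Fin N) (u v : Fin N → Fin 2) :
    site N m sigz * Matrix.single u v 1 * site N m sigz
      = (zsgn N m u * zsgn N m v) • Matrix.single u v 1 := by
  ext a b
  rw [conjZ_apply, Matrix.smul_apply]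
  by_cases h : u = a ∧ v = b
  · obtain ⟨rfl, rfl⟩ := h
    rw [Matrix.single_apply_same]
    ring_nf
  · simp [Matrix.single, h]

lemma conjX_E (N : ℕ) (m : Fin N) (u v : Fin N → Fin 2) :
    site N m sigx * Matrix.single u v 1 * site N m sigx
      = Matrix.single (flipAt N m u) (flipAt N m v) 1 := by
  ext a b
  rw [conjX_apply]
  by_cases h : flipAt N m u = a ∧ flipAt N m v = b
  · obtain ⟨rfl, rfl⟩ := h
    rw [flipAt_flipAt, flipAt_flipAt, Matrix.single_apply_same,
      Matrix.single_apply_same]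
  · have h' : ¬(u = flipAt N m a ∧ v = flipAt N m b) := by
      rintro ⟨rfl, rfl⟩
      exact h ⟨flipAt_flipAt _ _ _, flipAt_flipAt _ _ _⟩
    simp [Matrix.single, h, h']

lemma phiMap_rhoF {N : ℕ} (hN : 3 ≤ N) (lam a b c d : ℝ) :
    phiMap N (lastq N hN) lam (rhoF N a b c d)
      = rhoF N ((3 + Real.sqrt (1 - lam ^ 2)) / 4 * a + (1 - Real.sqrt (1 - lam ^ 2)) / 4 * b)
               ((3 + Real.sqrt (1 - lam ^ 2)) / 4 * b + (1 - Real.sqrt (1 - lam ^ 2)) / 4 * a)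
               ((1 + Real.sqrt (1 - lam ^ 2)) / 4 * c + (1 - Real.sqrt (1 - lam ^ 2)) / 4 * d)
               ((1 + Real.sqrt (1 - lam ^ 2)) / 4 * d + (1 - Real.sqrt (1 - lam ^ 2)) / 4 * c) := by
  unfold phiMap rhoF
  simp only [Matrix.mul_add, Matrix.add_mul, mul_smul_comm, smul_mul_assoc,
    conjZ_E, conjX_E, flip_w00 hN, flip_w11 hN, flip_w01 hN, flip_w10 hN,
    zsgn_w00 hN, zsgn_w11 hN, zsgn_w01 hN, zsgn_w10 hN]
  push_cast
  module

lemma ghzVec_eq (N : ℕ) (u : Fin N → Fin 2) :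
    ghzVec N u = if u = w00 N then ((1 / Real.sqrt 2 : ℝ) : ℂ)
      else if u = w11 N then ((1 / Real.sqrt 2 : ℝ) : ℂ) else 0 := by
  unfold ghzVec
  have h0 : (∀ i, u i = 0) ↔ u = w00 N := by
    constructor
    · intro h; funext i; exact h i
    · intro h i; rw [h]; rfl
  have h1 : (∀ i, u i = 1) ↔ u = w11 N := by
    constructor
    · intro h; funext i; exact h i
    · intro h i; rw [h]; rfl
  simp only [h0, h1]

lemma outer_ghz {N : ℕ} (hN : 3 ≤ N) :
    outer N (ghzVec N) = rhoF N (1/2) 0 (1/2) 0 := by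
  have hr0 : (1 / Real.sqrt 2) * (1 / Real.sqrt 2) = (1/2 : ℝ) := by
    rw [div_mul_div_comm, Real.mul_self_sqrt (le_of_lt two_pos)]
    norm_num
  have hr : ((1 / Real.sqrt 2 : ℝ) : ℂ) * star ((1 / Real.sqrt 2 : ℝ) : ℂ) = 1/2 := by
    rw [Complex.star_def, Complex.conj_ofReal, ← Complex.ofReal_mul, hr0]
    norm_num
  ext u v
  rw [outer, Matrix.vecMulVec_apply, Pi.star_apply, ghzVec_eq, ghzVec_eq]
  have n1 := w00_ne_w11 hN
  have n2 := w00_ne_w01 hN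
  have n3 := w00_ne_w10 hN
  have n4 := w11_ne_w01 hN
  have n5 := w11_ne_w10 hN
  have n6 := w01_ne_w10 hN
  by_cases hu0 : u = w00 N <;> by_cases hu1 : u = w11 N <;>
    by_cases hv0 : v = w00 N <;> by_cases hv1 : v = w11 N <;>
    simp_all [rhoF, Matrix.single, hr, eq_comm, n1, n2, n3, n4, n5, n6,
        Ne.symm n1, Ne.symm n2, Ne.symm n3, Ne.symm n4, Ne.symm n5, Ne.symm n6]

lemma trace_mul_E (N : ℕ) (M : QM N) (u v : Fin N → Fin 2) :
    (M * Matrix.single u v (1 : ℂ)).trace = M v u := by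
  simp only [Matrix.trace, Matrix.diag, Matrix.mul_apply, Matrix.single,
    Matrix.of_apply]
  rw [Finset.sum_comm]
  simp [ite_and, mul_ite, Finset.sum_ite_eq]

lemma trace_mul_rhoF (N : ℕ) (M : QM N) (a b c d : ℝ) :
    (M * rhoF N a b c d).trace
      = (a : ℂ) * (M (w00 N) (w00 N) + M (w11 N) (w11 N))
        + (b : ℂ) * (M (w01 N) (w01 N) + M (w10 N) (w10 N))
        + (c : ℂ) * (M (w11 N) (w00 N) + M (w00 N) (w11 N))
        + (d : ℂ) * (M (w10 N) (w01 N) + M (w01 N) (w10 N)) := by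
  simp only [rhoF, Matrix.mul_add, mul_smul_comm, Matrix.trace_add, Matrix.trace_smul,
    trace_mul_E, smul_eq_mul]
  try ring

lemma ghzS1_apply (N : ℕ) (u v : Fin N → Fin 2) :
    ghzS1 N u v = if ∀ i, u i ≠ v i then 1 else 0 := by
  unfold ghzS1 tensorAll
  by_cases h : ∀ i, u i ≠ v i
  · rw [Matrix.of_apply, if_pos h]
    exact Finset.prod_eq_one fun i _ => by simp [sigx_apply, h i]
  · push_neg at h
    obtain ⟨i, hi⟩ := h
    rw [Matrix.of_apply, if_neg (by push_neg; exact ⟨i, hi⟩)]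
    exact Finset.prod_eq_zero (Finset.mem_univ i) (by simp [sigx_apply, hi])

def gfun (N : ℕ) (m : Fin N) (v : Fin N → Fin 2) : ℂ :=
  ∏ i, (if i.val = m.val - 1 ∨ i = m then (if v i = 0 then 1 else -1) else 1)

lemma ghzSz_diag (N : ℕ) (m : Fin N) :
    ghzSz N m = Matrix.diagonal (gfun N m) := by
  ext u v
  by_cases h : u = v
  · subst h
    simp only [ghzSz, tensorAll, Matrix.of_apply, Matrix.diagonal_apply_eq, gfun]
    refine Finset.prod_congr rfl fun i _ => ?_
    by_cases hc : i.val = m.val - 1 ∨ i = m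
    · simp [hc, sigz_apply]
    · simp [hc, Matrix.one_apply]
  · obtain ⟨i, hi⟩ : ∃ i, u i ≠ v i := by
      by_contra hc; push_neg at hc; exact h (funext hc)
    simp only [ghzSz, tensorAll, Matrix.of_apply, Matrix.diagonal_apply_ne _ h]
    refine Finset.prod_eq_zero (Finset.mem_univ i) ?_
    by_cases hc : i.val = m.val - 1 ∨ i = m
    · simp [hc, sigz_apply, hi]
    · simp [hc, Matrix.one_apply, hi]

lemma diag_list_prod {n : Type*} [Fintype n] [DecidableEq n]
    (l : List (n → ℂ)) :
    (l.map Matrix.diagonal).prod = Matrix.diagonal fun v => (l.map (fun f => f v)).prod := by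
  induction l with
  | nil => simp [Matrix.diagonal_one]
  | cons f l ih => simp [ih, Matrix.diagonal_mul_diagonal]

lemma ghzProd_diag (N : ℕ) :
    ghzProd N = Matrix.diagonal fun v =>
      ((((List.finRange N).filter (fun m => m.val ≠ 0)).map
        (fun m => (1 + gfun N m v) / 2)).prod) := by
  unfold ghzProd
  have h1 : (((List.finRange N).filter (fun m => m.val ≠ 0)).map
      (fun m => (1/2 : ℂ) • ((1 : QM N) + ghzSz N m)))
      = ((((List.finRange N).filter (fun m => m.val ≠ 0)).map
        (fun m => fun v => (1 + gfun N m v) / 2)).map Matrix.diagonal) := by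
    rw [List.map_map]
    refine List.map_congr_left fun m _ => ?_
    rw [ghzSz_diag]
    ext u v
    by_cases h : u = v
    · subst h; simp [Matrix.diagonal]; ring
    · simp [Matrix.diagonal_apply_ne _ h, Matrix.one_apply, h]
  rw [h1, diag_list_prod]
  simp only [List.map_map]
  rfl

lemma gfun_w00 (N : ℕ) (m : Fin N) : gfun N m (w00 N) = 1 := by
  unfold gfun
  exact Finset.prod_eq_one fun i _ => by simp [w00]

lemma gfun_w11 (N : ℕ) (m : Fin N) (hm : m.val ≠ 0) : gfun N m (w11 N) = 1 := by
  have hlt : m.val - 1 < N := by omega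
  set i1 : Fin N := ⟨m.val - 1, hlt⟩ with hi1
  have hne : i1 ≠ m := by
    intro h
    have := congrArg Fin.val h
    simp [hi1] at this
    omega
  unfold gfun
  have hpt : ∀ i : Fin N, (if i.val = m.val - 1 ∨ i = m then (if w11 N i = 0 then 1 else (-1 : ℂ)) else 1)
      = (if i = i1 then -1 else 1) * (if i = m then -1 else 1) := by
    intro i
    have hv : (i.val = m.val - 1) ↔ i = i1 := by rw [Fin.ext_iff]
    by_cases h2 : i = m
    · subst h2
      rw [if_pos (Or.inr rfl)]
      simp [w11, Ne.symm hne]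
    · by_cases h1 : i = i1
      · subst h1
        rw [if_pos (Or.inl (hv.mpr rfl))]
        simp [w11, h2]
      · rw [if_neg (by rw [hv]; tauto), if_neg h1, if_neg h2]
        simp
  rw [Finset.prod_congr rfl fun i _ => hpt i, Finset.prod_mul_distrib,
    Finset.prod_ite_eq' Finset.univ i1 (fun _ => (-1 : ℂ)),
    Finset.prod_ite_eq' Finset.univ m (fun _ => (-1 : ℂ))]
  simp

lemma gfun_last_w01 {N : ℕ} (hN : 3 ≤ N) : gfun N (lastq N hN) (w01 N) = -1 := by
  unfold gfun
  have hlast : (lastq N hN).val = N - 1 := rfl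
  have hpt : ∀ i : Fin N,
      (if i.val = (lastq N hN).val - 1 ∨ i = lastq N hN then (if w01 N i = 0 then 1 else (-1 : ℂ)) else 1)
      = (if i = lastq N hN then -1 else 1) := by
    intro i
    by_cases h2 : i = lastq N hN
    · subst h2
      rw [if_pos (Or.inr rfl), if_pos rfl]
      simp [w01_last hN]
    · have hv : i.val ≠ N - 1 := fun hc => h2 (Fin.ext (by rw [hlast, hc]))
      rw [if_neg h2]
      by_cases h1 : i.val = (lastq N hN).val - 1
      · rw [if_pos (Or.inl h1)]
        simp [w01, hv]
      · rw [if_neg (by tauto)]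
  rw [Finset.prod_congr rfl fun i _ => hpt i,
    Finset.prod_ite_eq' Finset.univ (lastq N hN) (fun _ => (-1 : ℂ))]
  simp

lemma gfun_last_w10 {N : ℕ} (hN : 3 ≤ N) : gfun N (lastq N hN) (w10 N) = -1 := by
  have hlt : N - 2 < N := by omega
  set i1 : Fin N := ⟨N - 2, hlt⟩ with hi1
  have hlast : (lastq N hN).val = N - 1 := rfl
  have hi1v : i1.val = N - 2 := rfl
  unfold gfun
  have hpt : ∀ i : Fin N,
      (if i.val = (lastq N hN).val - 1 ∨ i = lastq N hN then (if w10 N i = 0 then 1 else (-1 : ℂ)) else 1)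
      = (if i = i1 then -1 else 1) := by
    intro i
    by_cases h1 : i = i1
    · subst h1
      have hv : i1.val ≠ N - 1 := by rw [hi1v]; omega
      rw [if_pos (Or.inl (by rw [hi1v, hlast]; omega)), if_pos rfl]
      simp [w10, hv]
    · rw [if_neg h1]
      by_cases h2 : i = lastq N hN
      · subst h2
        rw [if_pos (Or.inr rfl)]
        simp [w10_last hN]
      · have hv : i.val ≠ N - 1 := fun hc => h2 (Fin.ext (by rw [hlast, hc]))
        have hc : ¬(i.val = (lastq N hN).val - 1) := by
          intro hc
          exact h1 (Fin.ext (by rw [hi1v, hc, hlast]; omega))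
        rw [if_neg (by tauto)]
  rw [Finset.prod_congr rfl fun i _ => hpt i,
    Finset.prod_ite_eq' Finset.univ i1 (fun _ => (-1 : ℂ))]
  simp

lemma ghzProd_w00 {N : ℕ} (hN : 3 ≤ N) : ghzProd N (w00 N) (w00 N) = 1 := by
  rw [ghzProd_diag, Matrix.diagonal_apply_eq]
  refine List.prod_eq_one fun x hx => ?_
  rcases List.mem_map.mp hx with ⟨m, hm, rfl⟩
  rw [gfun_w00]
  norm_num

lemma ghzProd_w11 {N : ℕ} (hN : 3 ≤ N) : ghzProd N (w11 N) (w11 N) = 1 := by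
  rw [ghzProd_diag, Matrix.diagonal_apply_eq]
  refine List.prod_eq_one fun x hx => ?_
  rcases List.mem_map.mp hx with ⟨m, hm, rfl⟩
  have hm0 : m.val ≠ 0 := by
    have := (List.mem_filter.mp hm).2
    simpa using this
  rw [gfun_w11 N m hm0]
  norm_num

lemma lastq_mem {N : ℕ} (hN : 3 ≤ N) :
    lastq N hN ∈ (List.finRange N).filter (fun m => m.val ≠ 0) := by
  refine List.mem_filter.mpr ⟨List.mem_finRange _, ?_⟩
  have : (lastq N hN).val = N - 1 := rfl
  simp [this]
  omega

lemma ghzProd_w01 {N : ℕ} (hN : 3 ≤ N) : ghzProd N (w01 N) (w01 N) = 0 := by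
  rw [ghzProd_diag, Matrix.diagonal_apply_eq]
  refine List.prod_eq_zero ?_
  refine List.mem_map.mpr ⟨lastq N hN, lastq_mem hN, ?_⟩
  rw [gfun_last_w01 hN]
  ring

lemma ghzProd_w10 {N : ℕ} (hN : 3 ≤ N) : ghzProd N (w10 N) (w10 N) = 0 := by
  rw [ghzProd_diag, Matrix.diagonal_apply_eq]
  refine List.prod_eq_zero ?_
  refine List.mem_map.mpr ⟨lastq N hN, lastq_mem hN, ?_⟩
  rw [gfun_last_w10 hN]
  ring

lemma ghzProd_ne {N : ℕ} (u v : Fin N → Fin 2) (h : u ≠ v) : ghzProd N u v = 0 := by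
  rw [ghzProd_diag, Matrix.diagonal_apply_ne _ h]

lemma wit_apply (N : ℕ) (lam : ℝ) (u v : Fin N → Fin 2) :
    ghzWitnessMod N lam u v
      = 3 * (1 : QM N) u v - ((1 : QM N) u v + lam * ghzS1 N u v) - 2 * ghzProd N u v := by
  simp only [ghzWitnessMod, Matrix.sub_apply, Matrix.add_apply, Matrix.smul_apply,
    smul_eq_mul]
  ring

lemma ghzS1_diag_special {N : ℕ} (hN : 3 ≤ N) (u : Fin N → Fin 2) :
    ghzS1 N u u = 0 := by
  rw [ghzS1_apply, if_neg]
  intro h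
  exact h ⟨0, by omega⟩ rfl

lemma ghzS1_w00_w11 {N : ℕ} (hN : 3 ≤ N) : ghzS1 N (w00 N) (w11 N) = 1 := by
  rw [ghzS1_apply, if_pos]
  intro i
  simp [w00, w11]

lemma ghzS1_w11_w00 {N : ℕ} (hN : 3 ≤ N) : ghzS1 N (w11 N) (w00 N) = 1 := by
  rw [ghzS1_apply, if_pos]
  intro i
  simp [w00, w11]

lemma ghzS1_w01_w10 {N : ℕ} (hN : 3 ≤ N) : ghzS1 N (w01 N) (w10 N) = 1 := by
  rw [ghzS1_apply, if_pos]
  intro i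
  by_cases h : i.val = N - 1 <;> simp [w01, w10, h]

lemma ghzS1_w10_w01 {N : ℕ} (hN : 3 ≤ N) : ghzS1 N (w10 N) (w01 N) = 1 := by
  rw [ghzS1_apply, if_pos]
  intro i
  by_cases h : i.val = N - 1 <;> simp [w01, w10, h]

lemma trace_wit {N : ℕ} (hN : 3 ≤ N) (lam a b c d : ℝ) :
    (ghzWitnessMod N lam * rhoF N a b c d).trace
      = ((4 * b - 2 * lam * (c + d) : ℝ) : ℂ) := by
  rw [trace_mul_rhoF]
  rw [wit_apply, wit_apply, wit_apply, wit_apply, wit_apply, wit_apply, wit_apply, wit_apply]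
  rw [ghzProd_w00 hN, ghzProd_w11 hN, ghzProd_w01 hN, ghzProd_w10 hN,
    ghzProd_ne _ _ (w00_ne_w11 hN),
    ghzProd_ne _ _ (Ne.symm (w00_ne_w11 hN)),
    ghzProd_ne _ _ (w01_ne_w10 hN),
    ghzProd_ne _ _ (Ne.symm (w01_ne_w10 hN))]
  rw [ghzS1_diag_special hN, ghzS1_diag_special hN, ghzS1_diag_special hN,
    ghzS1_diag_special hN, ghzS1_w00_w11 hN, ghzS1_w11_w00 hN, ghzS1_w01_w10 hN,
    ghzS1_w10_w01 hN]
  rw [Matrix.one_apply_eq, Matrix.one_apply_eq, Matrix.one_apply_eq, Matrix.one_apply_eq,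
    Matrix.one_apply_ne (w00_ne_w11 hN), Matrix.one_apply_ne (Ne.symm (w00_ne_w11 hN)),
    Matrix.one_apply_ne (w01_ne_w10 hN), Matrix.one_apply_ne (Ne.symm (w01_ne_w10 hN))]
  push_cast
  ring

def aS (s : ℝ) (j : ℕ) : ℝ := 1/4 + ((1+s)/2)^j/4
def bS (s : ℝ) (j : ℕ) : ℝ := 1/4 - ((1+s)/2)^j/4
def cS (s : ℝ) (j : ℕ) : ℝ := ((1/2)^j + (s/2)^j)/4
def dS (s : ℝ) (j : ℕ) : ℝ := ((1/2)^j - (s/2)^j)/4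

lemma phiMap_seq {N : ℕ} (hN : 3 ≤ N) (lam : ℝ) (j : ℕ) :
    phiMap N (lastq N hN) lam
      (rhoF N (aS (Real.sqrt (1 - lam^2)) j) (bS (Real.sqrt (1 - lam^2)) j)
        (cS (Real.sqrt (1 - lam^2)) j) (dS (Real.sqrt (1 - lam^2)) j))
      = rhoF N (aS (Real.sqrt (1 - lam^2)) (j+1)) (bS (Real.sqrt (1 - lam^2)) (j+1))
        (cS (Real.sqrt (1 - lam^2)) (j+1)) (dS (Real.sqrt (1 - lam^2)) (j+1)) := by
  rw [phiMap_rhoF hN]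
  set s := Real.sqrt (1 - lam^2)
  have e1 : (3 + s)/4 * aS s j + (1 - s)/4 * bS s j = aS s (j+1) := by
    unfold aS bS; ring
  have e2 : (3 + s)/4 * bS s j + (1 - s)/4 * aS s j = bS s (j+1) := by
    unfold aS bS; ring
  have e3 : (1 + s)/4 * cS s j + (1 - s)/4 * dS s j = cS s (j+1) := by
    unfold cS dS; ring
  have e4 : (1 + s)/4 * dS s j + (1 - s)/4 * cS s j = dS s (j+1) := by
    unfold cS dS; ring
  rw [e1, e2, e3, e4]

/-- arbitrarily many sequential detections for the GHZ state.
For every integer `N ≥ 3` and every natural number `n`, there exist sharpness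
parameters `λ_1, …, λ_n ∈ (0,1)` such that, setting `ρ_1 = |GHZ_N⟩⟨GHZ_N|` and
`ρ_k = (id ⊗ Φ_{λ_{k−1}})(ρ_{k−1})` for `2 ≤ k ≤ n` (the map acting on the `N`-th
qubit), one has `Tr(W^{λ_k} ρ_k) < 0` for every `k = 1, …, n`; i.e., all `n`
sequential observers detect genuine multipartite entanglement. -/
theorem ghz_arbitrarily_many_sequential_detections
    (N : ℕ) (hN : 3 ≤ N) (n : ℕ) :
    ∃ lam : ℕ → ℝ,
      (∀ k, 1 ≤ k → k ≤ n → lam k ∈ Set.Ioo (0 : ℝ) 1) ∧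
      ∀ ρ : ℕ → QM N,
        ρ 1 = outer N (ghzVec N) →
        (∀ k, 2 ≤ k → k ≤ n →
          ρ k = phiMap N ⟨N - 1, by omega⟩ (lam (k - 1)) (ρ (k - 1))) →
        ∀ k, 1 ≤ k → k ≤ n → ((ghzWitnessMod N (lam k) * ρ k).trace).re < 0 := by
  set L : ℝ := (1/2)^n / (n + 2) with hLdef
  have hn2 : (0:ℝ) < (n:ℝ) + 2 := by positivity
  have hLpos : 0 < L := by positivity
  have hpow_le_one : ((1:ℝ)/2)^n ≤ 1 := by
    apply pow_le_one₀ <;> norm_num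
  have hLle : L ≤ 1/2 := by
    rw [hLdef, div_le_iff₀ hn2]
    nlinarith
  have hL1 : L < 1 := by linarith
  refine ⟨fun _ => L, fun k _ _ => ⟨hLpos, hL1⟩, ?_⟩
  intro ρ hρ1 hρrec k hk1 hkn
  set s : ℝ := Real.sqrt (1 - L^2) with hsdef
  have hs0 : 0 ≤ s := Real.sqrt_nonneg _
  have hsge : 1 - L^2 ≤ s := by
    have h1 : (0:ℝ) ≤ 1 - L^2 := by nlinarith
    have h2 : Real.sqrt ((1-L^2)^2) ≤ Real.sqrt (1-L^2) := Real.sqrt_le_sqrt (by nlinarith)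
    rwa [Real.sqrt_sq h1] at h2
  -- identify rho k
  have key : ∀ k, 1 ≤ k → k ≤ n →
      ρ k = rhoF N (aS s (k-1)) (bS s (k-1)) (cS s (k-1)) (dS s (k-1)) := by
    intro k
    induction k with
    | zero => omega
    | succ k ih =>
      intro _ hkn'
      by_cases hk0 : k = 0
      · subst hk0
        rw [hρ1, outer_ghz hN]
        have h0 : aS s 0 = 1/2 := by norm_num [aS]
        have h1 : bS s 0 = 0 := by norm_num [bS]
        have h2 : cS s 0 = 1/2 := by norm_num [cS]
        have h3 : dS s 0 = 0 := by norm_num [dS]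
        simp only [Nat.add_sub_cancel, h0, h1, h2, h3]
      · have hk1' : 1 ≤ k := by omega
        have hrec := hρrec (k+1) (by omega) hkn'
        have hfin : (⟨N - 1, by omega⟩ : Fin N) = lastq N hN := rfl
        rw [hrec, hfin]
        simp only [Nat.add_sub_cancel]
        rw [ih hk1' (by omega)]
        obtain ⟨j, rfl⟩ : ∃ j, k = j + 1 := ⟨k - 1, by omega⟩
        simp only [Nat.add_sub_cancel]
        exact phiMap_seq hN L j
  rw [key k hk1 hkn, trace_wit hN, Complex.ofReal_re]
  -- numeric inequality
  obtain ⟨j, rfl⟩ : ∃ j, k = j + 1 := ⟨k - 1, by omega⟩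
  simp only [Nat.add_sub_cancel]
  have hjn : j ≤ n := by omega
  have hb : 4 * bS s j = 1 - ((1+s)/2)^j := by unfold bS; ring
  have hcd : cS s j + dS s j = (1/2)^j / 2 := by unfold cS dS; ring
  rw [hb, hcd]
  -- chain of inequalities
  have h2 : (0:ℝ) ≤ 1 - L^2/2 := by nlinarith
  have h1 : (1:ℝ) - L^2/2 ≤ (1+s)/2 := by linarith
  have h3 : (1 - L^2/2)^j ≤ ((1+s)/2)^j := pow_le_pow_left₀ h2 h1 j
  have h4 : 1 + (j:ℝ) * (-(L^2/2)) ≤ (1 + (-(L^2/2)))^j := by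
    apply one_add_mul_le_pow
    nlinarith
  have h4' : 1 - (j:ℝ) * (L^2/2) ≤ (1 - L^2/2)^j := by
    have : (1:ℝ) + (-(L^2/2)) = 1 - L^2/2 := by ring
    rw [this] at h4
    linarith
  have hp : ((1:ℝ)/2)^n ≤ (1/2)^j := by
    apply pow_le_pow_of_le_one (by norm_num) (by norm_num) hjn
  have hjcast : (j:ℝ) < 2 * ((n:ℝ) + 2) := by
    have : (j:ℝ) ≤ (n:ℝ) := by exact_mod_cast hjn
    linarith
  have hkey : (j:ℝ) * (L/2) < (1/2)^j := by
    have hL2 : L / 2 = (1/2)^n / (2*((n:ℝ)+2)) := by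
      rw [hLdef, div_div, mul_comm ((n:ℝ)+2) 2]
    rw [hL2]
    have hppos : (0:ℝ) < (1/2)^n := by positivity
    calc (j:ℝ) * ((1/2)^n / (2*((n:ℝ)+2)))
        = ((j:ℝ) / (2*((n:ℝ)+2))) * (1/2)^n := by ring
      _ < 1 * (1/2)^n := by
          apply mul_lt_mul_of_pos_right _ hppos
          rw [div_lt_one (by positivity)]
          exact hjcast
      _ ≤ (1/2)^j := by rw [one_mul]; exact hp
  nlinarith [h3, h4', hkey, hLpos, mul_pos hLpos (show (0:ℝ) < (1/2)^j by positivity)]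


end
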